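/- Under the stated assumptions, the values c(v,t) form a synchronous Ψ-counter stabilising by round T_W + T_C + 1: for every round t ≥ t0 + T_C + 1 (hence in particular for every t ≥ T_W + T_C + 1) and all correct nodes v, w: c(v,t) = c(w,t) and c(v,t+1) = c(v,t) + 1 mod Ψ. -/

import Mathlib

/-- Theorem: the strong-pulser construction yields a counter.
Nodes in `V∖F` are correct; rounds `t ≥ 1`, round-1 values arbitrary.
Parameters: `Ψ ≥ 1`, `T_C ≥ 1`, `Φ ≥ T_C`, `T_W ≥ 1`.  The weak `Φ`-pulser
output `a` has a stabilisation round `t0 ≤ T_W` satisfying (W1) agreement from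
`t0` on, (W2) a pulse in round `t0`, (W3) silence for the following `Φ − 1`
rounds.  A consensus oracle `Y` gives, for each start round `s`, outputs
`Y(s,v) ∈ {0,…,Ψ−1}` (delivered in round `s + T_C`) of a `Ψ`-value consensus
instance with inputs `c'(·,s)`; it satisfies agreement and validity for every
start round `s ≥ t0` in which all correct nodes pulse and then stay silent for
`T_C − 1` rounds.  Each correct node runs the strong-pulser algorithm:
a phase counter `d(v,t) ∈ {1,…,T_C} ∪ {⊥}` restarted by pulses of `a`, the
tentative value `c'(v,t)` overwritten by `(Y(t−T_C,v) + T_C) mod Ψ` upon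
completion of an instance, and `c(v,t+1) = (c'(v,t) + 1) mod Ψ`.
Then the values `c(v,t)` form a synchronous `Ψ`-counter stabilising by round
`T_W + T_C + 1`: for every round `t ≥ t0 + T_C + 1` (hence in particular for
every `t ≥ T_W + T_C + 1`) all correct nodes agree on `c(·,t)` and increment
it by one modulo `Ψ`. -/
theorem strong_pulser_counter {V : Type*} (F : Set V)
    (Ψ TC Φ TW : ℕ) (hΨ : 1 ≤ Ψ) (hTC : 1 ≤ TC) (hΦ : TC ≤ Φ) (hTW : 1 ≤ TW)
    (a : V → ℕ → ℕ) (c c' : V → ℕ → ℕ) (d : V → ℕ → Option ℕ) (Y : ℕ → V → ℕ)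
    -- the weak `Φ`-pulser output and its stabilisation round `t0 ≤ T_W`:
    (habits : ∀ v, v ∉ F → ∀ t, a v t = 0 ∨ a v t = 1)
    (t0 : ℕ) (ht0l : 1 ≤ t0) (ht0u : t0 ≤ TW)
    (hW1 : ∀ t, t0 ≤ t → ∀ v, v ∉ F → ∀ w, w ∉ F → a v t = a w t)
    (hW2 : ∀ v, v ∉ F → a v t0 = 1)
    (hW3 : ∀ v, v ∉ F → ∀ t, t0 < t → t < t0 + Φ → a v t = 0)
    -- the consensus oracle: outputs in range, and agreement/validity for
    -- every start round `s ≥ t0` followed by `T_C − 1` rounds of silence: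
    (hYrange : ∀ s v, Y s v < Ψ)
    (hY : ∀ s, t0 ≤ s → (∀ v, v ∉ F → a v s = 1) →
      (∀ v, v ∉ F → ∀ σ, s < σ → σ < s + TC → a v σ = 0) →
      (∀ v, v ∉ F → ∀ w, w ∉ F → Y s v = Y s w) ∧
      (∀ x, (∀ v, v ∉ F → c' v s = x) → ∀ v, v ∉ F → Y s v = x))
    -- the algorithm, for every correct node and round `t ≥ 1`:
    (hdrange : ∀ v, v ∉ F → ∀ t,
      d v t = none ∨ ∃ ρ, d v t = some ρ ∧ 1 ≤ ρ ∧ ρ ≤ TC)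
    (hd : ∀ v, v ∉ F → ∀ t, 1 ≤ t →
      d v (t + 1) =
        if a v t = 1 then some 1
        else match d v t with
          | some ρ => if ρ < TC then some (ρ + 1) else none
          | none => none)
    (hc' : ∀ v, v ∉ F → ∀ t, 1 ≤ t →
      c' v t = if d v t = some TC then (Y (t - TC) v + TC) % Ψ else c v t)
    (hc : ∀ v, v ∉ F → ∀ t, 1 ≤ t → c v (t + 1) = (c' v t + 1) % Ψ) :
    ∀ t, t0 + TC + 1 ≤ t →
      (∀ v, v ∉ F → ∀ w, w ∉ F → c v t = c w t) ∧
      (∀ v, v ∉ F → c v (t + 1) = (c v t + 1) % Ψ) := by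

  -- Lemma A: agreement on `d` from round `t0 + 1` on.
  have hdagree : ∀ t, t0 + 1 ≤ t → ∀ v, v ∉ F → ∀ w, w ∉ F → d v t = d w t := by
    intro t ht
    induction t, ht using Nat.le_induction with
    | base =>
      intro v hv w hw
      rw [hd v hv t0 ht0l, hd w hw t0 ht0l, hW2 v hv, hW2 w hw]
      simp
    | succ t ht ih =>
      intro v hv w hw
      rw [hd v hv t (by omega), hd w hw t (by omega),
        hW1 t (by omega) v hv w hw, ih v hv w hw]
  -- Lemma B: after the pulse at `t0`, `d` counts up.
  have hdval : ∀ k, 1 ≤ k → k ≤ TC → ∀ v, v ∉ F → d v (t0 + k) = some k := by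
    intro k hk
    induction k, hk using Nat.le_induction with
    | base =>
      intro _ v hv
      rw [hd v hv t0 ht0l, hW2 v hv]
      simp
    | succ k hk ih =>
      intro hkTC v hv
      have h0 : a v (t0 + k) = 0 := hW3 v hv (t0 + k) (by omega) (by omega)
      have : d v (t0 + k + 1) = _ := hd v hv (t0 + k) (by omega)
      rw [h0] at this
      rw [ih (by omega) v hv] at this
      simpa [show (0:ℕ) ≠ 1 by omega, show k < TC by omega, show t0 + (k + 1) = t0 + k + 1 by omega] using this
  -- Lemma D: trace back from `d v (s + ρ) = some ρ` to a pulse at `s`.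
  have htrace : ∀ ρ, 1 ≤ ρ → ∀ s, 1 ≤ s → ∀ v, v ∉ F → d v (s + ρ) = some ρ →
      a v s = 1 ∧ (∀ σ, s < σ → σ < s + ρ → a v σ = 0) ∧
      (∀ σ, s < σ → σ ≤ s + ρ → d v σ = some (σ - s)) := by
    intro ρ hρ
    induction ρ, hρ using Nat.le_induction with
    | base =>
      intro s hs v hv hdv
      have heq : d v (s + 1) = _ := hd v hv s hs
      rcases habits v hv s with h0 | h1
      · exfalso
        rw [h0] at heq
        rw [hdv] at heq
        rcases hdrange v hv s with hn | ⟨ρ', hρ', h1ρ, hρTC⟩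
        · rw [hn] at heq; simp at heq
        · rw [hρ'] at heq
          by_cases hlt : ρ' < TC <;> simp [hlt] at heq <;> omega
      · refine ⟨h1, by omega, ?_⟩
        intro σ hσ1 hσ2
        have : σ = s + 1 := by omega
        subst this
        rw [hdv]
        congr 1
        omega
    | succ ρ hρ ih =>
      intro s hs v hv hdv
      have heq : d v (s + ρ + 1) = _ := hd v hv (s + ρ) (by omega)
      rw [show s + (ρ + 1) = s + ρ + 1 by omega] at hdv
      rw [hdv] at heq
      have ha0 : a v (s + ρ) = 0 := by
        rcases habits v hv (s + ρ) with h0 | h1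
        · exact h0
        · rw [h1] at heq; simp at heq; omega
      rw [ha0] at heq
      have hdsρ : d v (s + ρ) = some ρ := by
        rcases hdrange v hv (s + ρ) with hn | ⟨ρ', hρ', h1ρ, hρTC⟩
        · rw [hn] at heq; simp at heq
        · rw [hρ'] at heq
          by_cases hlt : ρ' < TC
          · simp [hlt] at heq; rw [hρ']; congr 1; omega
          · simp [hlt] at heq
      obtain ⟨hpa, hsil, hdv'⟩ := ih s hs v hv hdsρ
      refine ⟨hpa, ?_, ?_⟩
      · intro σ h1 h2
        by_cases hσ : σ < s + ρ
        · exact hsil σ h1 hσ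
        · have : σ = s + ρ := by omega
          subst this; exact ha0
      · intro σ h1 h2
        by_cases hσ : σ ≤ s + ρ
        · exact hdv' σ h1 hσ
        · have : σ = s + ρ + 1 := by omega
          subst this
          rw [hdv]
          congr 1
          omega
  -- Key: whenever a correct node completes an instance after stabilisation,
  -- all correct nodes do, all overwrite, and the `Y`-outputs agree.
  have hKey : ∀ t, t0 + TC ≤ t → ∀ v, v ∉ F → d v t = some TC →
      (∀ w, w ∉ F → c' w t = (Y (t - TC) w + TC) % Ψ) ∧
      (∀ w, w ∉ F → ∀ x, x ∉ F → Y (t - TC) w = Y (t - TC) x) := by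
    intro t ht v hv hdv
    set s := t - TC with hsdef
    have hst : t = s + TC := by omega
    have hs1 : 1 ≤ s := by omega
    have hst0 : t0 ≤ s := by omega
    rw [hst] at hdv
    obtain ⟨hpa, hsil, _⟩ := htrace TC hTC s hs1 v hv hdv
    have hpulseall : ∀ w, w ∉ F → a w s = 1 := by
      intro w hw
      rw [← hW1 s hst0 v hv w hw]; exact hpa
    have hsilall : ∀ w, w ∉ F → ∀ σ, s < σ → σ < s + TC → a w σ = 0 := by
      intro w hw σ h1 h2
      rw [← hW1 σ (by omega) v hv w hw]
      exact hsil σ h1 h2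
    have hYs := hY s hst0 hpulseall hsilall
    refine ⟨?_, hYs.1⟩
    intro w hw
    have hdw : d w t = some TC := by
      rw [hdagree t (by omega) w hw v hv, hst]; exact hdv
    rw [hc' w hw t (by omega), if_pos hdw]
  -- Lemma C: agreement on `c'` from round `t0 + TC` on.
  have hc'agree : ∀ t, t0 + TC ≤ t → ∀ v, v ∉ F → ∀ w, w ∉ F → c' v t = c' w t := by
    intro t ht
    induction t, ht using Nat.le_induction with
    | base =>
      intro v hv w hw
      have hdv : d v (t0 + TC) = some TC := hdval TC hTC le_rfl v hv
      obtain ⟨hcw, hYag⟩ := hKey (t0 + TC) le_rfl v hv hdv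
      rw [hcw v hv, hcw w hw, hYag v hv w hw]
    | succ t ht ih =>
      intro v hv w hw
      by_cases hdv : d v (t + 1) = some TC
      · obtain ⟨hcw, hYag⟩ := hKey (t + 1) (by omega) v hv hdv
        rw [hcw v hv, hcw w hw, hYag v hv w hw]
      · have hdw : d w (t + 1) ≠ some TC := by
          rw [hdagree (t + 1) (by omega) w hw v hv]; exact hdv
        rw [hc' v hv (t + 1) (by omega), if_neg hdv,
          hc' w hw (t + 1) (by omega), if_neg hdw,
          hc v hv t (by omega), hc w hw t (by omega), ih v hv w hw]
  intro t ht
  constructor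
  · intro v hv w hw
    obtain ⟨u, rfl⟩ : ∃ u, t = u + 1 := ⟨t - 1, by omega⟩
    rw [hc v hv u (by omega), hc w hw u (by omega),
      hc'agree u (by omega) v hv w hw]
  · intro v hv
    rw [hc v hv t (by omega)]
    by_cases hdv : d v t = some TC
    · -- a later instance completed; its output equals the running counter
      set s := t - TC with hsdef
      have hst : t = s + TC := by omega
      have hs1 : 1 ≤ s := by omega
      rw [hst] at hdv
      obtain ⟨hpa, hsil, hdσ⟩ := htrace TC hTC s hs1 v hv hdv
      -- `s` is strictly after `t0`, so by (W3) it is at least `t0 + Φ ≥ t0 + TC`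
      have hsbig : t0 + TC ≤ s := by
        by_contra hcon
        have : a v s = 0 := hW3 v hv s (by omega) (by omega)
        omega
      -- validity gives `Y s v = c' v s`
      have hpulseall : ∀ w, w ∉ F → a w s = 1 := by
        intro w hw
        rw [← hW1 s (by omega) v hv w hw]; exact hpa
      have hsilall : ∀ w, w ∉ F → ∀ σ, s < σ → σ < s + TC → a w σ = 0 := by
        intro w hw σ h1 h2
        rw [← hW1 σ (by omega) v hv w hw]
        exact hsil σ h1 h2
      have hval := (hY s (by omega) hpulseall hsilall).2 (c' v s)
        (fun w hw => hc'agree s hsbig w hw v hv) v hv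
      -- the counter runs synchronously from `s` to `t`
      have hrun : ∀ k, 1 ≤ k → k ≤ TC → c v (s + k) = (c' v s + k) % Ψ := by
        intro k hk
        induction k, hk using Nat.le_induction with
        | base =>
          intro _
          rw [hc v hv s hs1]
        | succ k hk ih =>
          intro hkTC
          have hdk : d v (s + k) = some k := by
            rw [hdσ (s + k) (by omega) (by omega)]
            congr 1
            omega
          rw [show s + (k + 1) = (s + k) + 1 by omega,
            hc v hv (s + k) (by omega), hc' v hv (s + k) (by omega),
            if_neg (by rw [hdk]; intro h; simp at h; omega), ih (by omega),
            Nat.mod_add_mod, Nat.add_assoc]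
      have hct : c v t = (c' v s + TC) % Ψ := by
        rw [hst]; exact hrun TC hTC le_rfl
      have hc't : c' v t = (c' v s + TC) % Ψ := by
        rw [hc' v hv t (by omega), if_pos (by rw [hst]; exact hdv),
          ← hsdef, hval]
      rw [hc't, hct]
    · rw [hc' v hv t (by omega), if_neg hdv]
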